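/- arXiv:2102.06104 — 9 statements merged into one kernel-verified Lean document; each statement's English description precedes it below -/
import Mathlib

section
/- For every abelian map ψ on a group G, every g ∈ G and every n ≥ 0, one has δⁿ(g) = g · ∏_{i=1}^{n} ψ^i(g)^{(-1)^i · C(n,i)}, where ψ^i denotes the i-fold composite of ψ, C(n,i) is the binomial coefficient, and the product is taken in increasing order of i. -/
def aDelta {G : Type*} [Group G] (ψ : G → G) (g : G) : G := g * ψ g⁻¹

def aPsi {G : Type*} [Group G] (ψ : G → G) (n : ℕ) (g : G) : G :=
  ((aDelta ψ)^[n] g)⁻¹ * g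

lemma listProdRange {M : Type*} [CommMonoid M] (f : ℕ → M) (n : ℕ) :
    ((List.range n).map f).prod = ∏ i ∈ Finset.range n, f i := by
  rw [Finset.prod_eq_multiset_prod]; rfl

lemma keyComb {M : Type*} [CommGroup M] (a : ℕ → M) (n : ℕ) :
    ((List.range (n+1)).map (fun i =>
        a i ^ ((-1:ℤ)^(i+1) * ((n+1).choose (i+1) : ℤ)))).prod
    = ((List.range n).map (fun i =>
        a i ^ ((-1:ℤ)^(i+1) * (n.choose (i+1) : ℤ)))).prod
      * (((List.range n).map (fun i =>
        a (i+1) ^ ((-1:ℤ)^(i+1) * (n.choose (i+1) : ℤ)))).prod)⁻¹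
      * (a 0)⁻¹ := by
  simp only [listProdRange]
  have h1 : ∀ i : ℕ, a i ^ ((-1:ℤ)^(i+1) * ((n+1).choose (i+1) : ℤ))
      = a i ^ ((-1:ℤ)^(i+1) * (n.choose (i+1) : ℤ))
        * (a i ^ ((-1:ℤ)^i * (n.choose i : ℤ)))⁻¹ := by
    intro i
    rw [← zpow_neg, ← zpow_add]
    congr 1
    have h := Nat.choose_succ_succ n i
    push_cast [h, pow_succ]
    ring
  have h2 : (∏ i ∈ Finset.range (n+1),
      a i ^ ((-1:ℤ)^(i+1) * ((n+1).choose (i+1) : ℤ)))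
      = (∏ i ∈ Finset.range (n+1), a i ^ ((-1:ℤ)^(i+1) * (n.choose (i+1) : ℤ)))
        * (∏ i ∈ Finset.range (n+1), a i ^ ((-1:ℤ)^i * (n.choose i : ℤ)))⁻¹ := by
    rw [← Finset.prod_inv_distrib, ← Finset.prod_mul_distrib]
    exact Finset.prod_congr rfl fun i _ => h1 i
  rw [h2, Finset.prod_range_succ, Finset.prod_range_succ', Nat.choose_succ_self]
  simp only [Nat.cast_zero, mul_zero, zpow_zero, mul_one, Nat.choose_zero_right,
    Nat.cast_one, pow_zero, one_mul, zpow_one]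
  group
  exact mul_right_comm _ _ _

/-- For an abelian map ψ, `δⁿ(g) = g · ∏_{i=1}^{n} ψ^i(g)^{(-1)^i C(n,i)}`. -/
theorem stmt0 {G : Type*} [Group G] (ψ : G → G)
    (hψ : ∀ a b : G, ψ (a * b) = ψ a * ψ b)
    (hab : ∀ a b : G, ψ a * ψ b = ψ b * ψ a)
    (n : ℕ) (g : G) :
    (aDelta ψ)^[n] g =
      g * (((List.range n).map (fun i =>
        (ψ^[i + 1] g) ^ ((-1 : ℤ) ^ (i + 1) * (n.choose (i + 1) : ℤ)))).prod) := by
  set Ψ : G →* G := MonoidHom.mk' ψ hψ with hΨ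
  set H : Subgroup G := Subgroup.closure (Set.range ψ) with hH
  letI : CommGroup H := Subgroup.closureCommGroupOfComm (by
    rintro _ ⟨a, rfl⟩ _ ⟨b, rfl⟩; exact hab a b)
  have hmem : ∀ i : ℕ, ψ^[i+1] g ∈ H := fun i =>
    Subgroup.subset_closure ⟨ψ^[i] g, (Function.iterate_succ_apply' ψ i g).symm⟩
  set a : ℕ → H := fun i => ⟨ψ^[i+1] g, hmem i⟩ with ha
  have hcoe : ∀ (m k : ℕ),
      (H.subtype (((List.range m).map (fun i =>
        a i ^ ((-1:ℤ)^(i+1) * (k.choose (i+1) : ℤ)))).prod))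
      = ((List.range m).map (fun i =>
        (ψ^[i+1] g) ^ ((-1:ℤ)^(i+1) * (k.choose (i+1) : ℤ)))).prod := by
    intro m k
    rw [map_list_prod, List.map_map]
    congr 1
  have hcoe' : ∀ (m k : ℕ),
      (H.subtype (((List.range m).map (fun i =>
        a (i+1) ^ ((-1:ℤ)^(i+1) * (k.choose (i+1) : ℤ)))).prod))
      = ((List.range m).map (fun i =>
        (ψ^[i+2] g) ^ ((-1:ℤ)^(i+1) * (k.choose (i+1) : ℤ)))).prod := by
    intro m k
    rw [map_list_prod, List.map_map]
    congr 1
  induction n with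
  | zero => simp
  | succ n ih =>
    rw [Function.iterate_succ_apply', ih]
    set L : G := ((List.range n).map (fun i =>
        (ψ^[i + 1] g) ^ ((-1 : ℤ) ^ (i + 1) * (n.choose (i + 1) : ℤ)))).prod with hL
    have hstep : aDelta ψ (g * L) = g * L * ((ψ L)⁻¹ * (ψ g)⁻¹) := by
      show g * L * ψ ((g * L)⁻¹) = _
      rw [show ψ ((g * L)⁻¹) = Ψ ((g * L)⁻¹) from rfl, map_inv, map_mul, mul_inv_rev]
      rfl
    rw [hstep]
    have hψL : ψ L = ((List.range n).map (fun i =>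
        (ψ^[i+2] g) ^ ((-1:ℤ)^(i+1) * (n.choose (i+1) : ℤ)))).prod := by
      rw [show ψ L = Ψ L from rfl, hL, map_list_prod, List.map_map]
      congr 1
      refine List.map_congr_left fun i _ => ?_
      show Ψ (ψ^[i+1] g ^ _) = _
      rw [map_zpow]
      congr 1
      show ψ (ψ^[i+1] g) = _
      rw [← Function.iterate_succ_apply' ψ (i+1) g]
    have hcongr := congrArg H.subtype (keyComb a n)
    rw [map_mul, map_mul, map_inv, map_inv, hcoe (n+1) (n+1), hcoe n n, hcoe' n n,
      ← hL, ← hψL] at hcongr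
    have ha0 : H.subtype (a 0) = ψ g := rfl
    rw [ha0] at hcongr
    rw [hcongr]
    group
end

section
/- For every abelian map ψ on a group G, all integers m, n ≥ 0 and all g, h ∈ G, the elements ψ_m(g) and ψ_n(h) commute: ψ_m(g)·ψ_n(h) = ψ_n(h)·ψ_m(g). -/
lemma aPsi_mem_closure {G : Type*} [Group G] (ψ : G → G) (n : ℕ) (g : G) :
    aPsi ψ n g ∈ Subgroup.closure (Set.range ψ) := by
  induction n with
  | zero => simpa [aPsi] using one_mem _
  | succ k ih =>
      have : aPsi ψ (k+1) g = (ψ ((aDelta ψ)^[k] g)⁻¹)⁻¹ * aPsi ψ k g := by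
        simp [aPsi, Function.iterate_succ_apply', aDelta, mul_assoc]
      rw [this]
      exact mul_mem (inv_mem (Subgroup.subset_closure ⟨_, rfl⟩)) ih

/-- For an abelian map ψ, the elements `ψ_m(g)` and `ψ_n(h)` commute. -/
theorem stmt3 {G : Type*} [Group G] (ψ : G → G)
    (hψ : ∀ a b : G, ψ (a * b) = ψ a * ψ b)
    (hab : ∀ a b : G, ψ a * ψ b = ψ b * ψ a)
    (m n : ℕ) (g h : G) :
    aPsi ψ m g * aPsi ψ n h = aPsi ψ n h * aPsi ψ m g := by
  have key : ∀ x ∈ Subgroup.closure (Set.range ψ),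
      ∀ y ∈ Subgroup.closure (Set.range ψ), Commute x y := by
    intro x hx
    induction hx using Subgroup.closure_induction with
    | mem a ha =>
        intro y hy
        induction hy using Subgroup.closure_induction with
        | mem b hb =>
            obtain ⟨a', rfl⟩ := ha
            obtain ⟨b', rfl⟩ := hb
            exact hab a' b'
        | one => exact Commute.one_right a
        | mul b c _ _ hb hc => exact (hb).mul_right hc
        | inv b _ hb => exact hb.inv_right
    | one => intro y _; exact Commute.one_left y
    | mul a b _ _ hA hB => intro y hy; exact (hA y hy).mul_left (hB y hy)
    | inv a _ hA => intro y hy; exact (hA y hy).inv_left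
  exact key _ (aPsi_mem_closure ψ m g) _ (aPsi_mem_closure ψ n h)
end

section
/- For every abelian map ψ on a group G, every n ≥ 0 and every g ∈ G, one has g·ψ_n(g⁻¹) = δⁿ(g) (i.e., the map 1 − ψ_n equals δⁿ), and the recursion ψ_{n+1}(g) = ψ(g)·ψ_n(g·ψ(g⁻¹)) holds. -/
section Aux
variable {G : Type*} [Group G] (ψ : G → G)

lemma aux_psi_one (hψ : ∀ a b : G, ψ (a * b) = ψ a * ψ b) : ψ 1 = 1 := by
  have h := hψ 1 1
  rw [one_mul] at h
  exact (left_eq_mul.mp h)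

lemma aux_psi_inv (hψ : ∀ a b : G, ψ (a * b) = ψ a * ψ b) (a : G) : ψ a⁻¹ = (ψ a)⁻¹ := by
  have h : ψ a⁻¹ * ψ a = 1 := by rw [← hψ, inv_mul_cancel, aux_psi_one ψ hψ]
  exact eq_inv_of_mul_eq_one_left h

/-- `g⁻¹ · δⁿ(g)` commutes with every element of the image of `ψ`. -/
lemma aux_comm (hψ : ∀ a b : G, ψ (a * b) = ψ a * ψ b)
    (hab : ∀ a b : G, ψ a * ψ b = ψ b * ψ a) :
    ∀ (n : ℕ) (g x : G),
      ψ x * (g⁻¹ * (aDelta ψ)^[n] g) = (g⁻¹ * (aDelta ψ)^[n] g) * ψ x := by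
  intro n
  induction n with
  | zero => intro g x; simp
  | succ n ih =>
    intro g x
    rw [Function.iterate_succ_apply']
    set D := (aDelta ψ)^[n] g with hD
    show ψ x * (g⁻¹ * (D * ψ D⁻¹)) = (g⁻¹ * (D * ψ D⁻¹)) * ψ x
    calc ψ x * (g⁻¹ * (D * ψ D⁻¹)) = (ψ x * (g⁻¹ * D)) * ψ D⁻¹ := by
          simp [mul_assoc]
      _ = ((g⁻¹ * D) * ψ x) * ψ D⁻¹ := by rw [ih g x]
      _ = (g⁻¹ * D) * (ψ x * ψ D⁻¹) := by simp [mul_assoc]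
      _ = (g⁻¹ * D) * (ψ D⁻¹ * ψ x) := by rw [hab]
      _ = (g⁻¹ * (D * ψ D⁻¹)) * ψ x := by simp [mul_assoc]

lemma aux_inv_delta (hψ : ∀ a b : G, ψ (a * b) = ψ a * ψ b)
    (hab : ∀ a b : G, ψ a * ψ b = ψ b * ψ a) :
    ∀ (n : ℕ) (g : G),
      (aDelta ψ)^[n] g⁻¹ = g⁻¹ * ((aDelta ψ)^[n] g)⁻¹ * g := by
  intro n
  induction n with
  | zero => intro g; simp
  | succ n ih =>
    intro g
    rw [Function.iterate_succ_apply', Function.iterate_succ_apply', ih g]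
    set D := (aDelta ψ)^[n] g with hD
    show aDelta ψ (g⁻¹ * D⁻¹ * g) = g⁻¹ * (aDelta ψ D)⁻¹ * g
    have hc := aux_comm ψ hψ hab n g
    -- (aDelta ψ D)⁻¹ = ψ D * D⁻¹
    have h1 : (aDelta ψ D)⁻¹ = ψ D * D⁻¹ := by
      show (D * ψ D⁻¹)⁻¹ = ψ D * D⁻¹
      rw [aux_psi_inv ψ hψ, mul_inv_rev, inv_inv]
    rw [h1]
    show (g⁻¹ * D⁻¹ * g) * ψ (g⁻¹ * D⁻¹ * g)⁻¹ = g⁻¹ * (ψ D * D⁻¹) * g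
    have h2 : (g⁻¹ * D⁻¹ * g)⁻¹ = g⁻¹ * D * g := by group
    rw [h2, hψ, hψ]
    -- LHS: g⁻¹ * D⁻¹ * g * (ψ g⁻¹ * ψ D * ψ g)
    have h3 : ψ g⁻¹ * ψ D * ψ g = ψ D := by
      rw [hab (g⁻¹) D, mul_assoc, aux_psi_inv ψ hψ, inv_mul_cancel, mul_one]
    rw [h3]
    -- goal: g⁻¹ * D⁻¹ * g * ψ D = g⁻¹ * (ψ D * D⁻¹) * g
    -- write D⁻¹ * g = (g⁻¹ * D)⁻¹ and use commutation
    have h4 : ψ D * (g⁻¹ * D) = (g⁻¹ * D) * ψ D := hc D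
    have h5 : ψ D * (g⁻¹ * D)⁻¹ = (g⁻¹ * D)⁻¹ * ψ D := by
      have := congrArg (fun y => (g⁻¹ * D)⁻¹ * y * (g⁻¹ * D)⁻¹) h4
      simpa [mul_assoc] using this.symm
    calc g⁻¹ * D⁻¹ * g * ψ D = g⁻¹ * ((D⁻¹ * g) * ψ D) := by simp [mul_assoc]
      _ = g⁻¹ * (ψ D * (D⁻¹ * g)) := by
          have : D⁻¹ * g = ((g⁻¹ * D)⁻¹) := by group
          rw [this, ← h5]
      _ = g⁻¹ * (ψ D * D⁻¹) * g := by simp [mul_assoc]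

end Aux

/-- For an abelian map ψ: `1 - ψ_n = δⁿ`, i.e. `g·ψ_n(g⁻¹) = δⁿ(g)`, and the
recursion `ψ_{n+1}(g) = ψ(g)·ψ_n(g·ψ(g⁻¹))` holds. -/
theorem stmt4 {G : Type*} [Group G] (ψ : G → G)
    (hψ : ∀ a b : G, ψ (a * b) = ψ a * ψ b)
    (hab : ∀ a b : G, ψ a * ψ b = ψ b * ψ a)
    (n : ℕ) (g : G) :
    g * aPsi ψ n g⁻¹ = (aDelta ψ)^[n] g ∧
    aPsi ψ (n + 1) g = ψ g * aPsi ψ n (g * ψ g⁻¹) := by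
  constructor
  · show g * (((aDelta ψ)^[n] g⁻¹)⁻¹ * g⁻¹) = (aDelta ψ)^[n] g
    rw [aux_inv_delta ψ hψ hab n g]
    group
  · show ((aDelta ψ)^[n+1] g)⁻¹ * g
        = ψ g * (((aDelta ψ)^[n] (g * ψ g⁻¹))⁻¹ * (g * ψ g⁻¹))
    have hδ : g * ψ g⁻¹ = aDelta ψ g := rfl
    rw [hδ, ← Function.iterate_succ_apply]
    set E := (aDelta ψ)^[n+1] g with hE
    -- c := g⁻¹ * E commutes with ψ g
    have hc : ψ g * (g⁻¹ * E) = (g⁻¹ * E) * ψ g := aux_comm ψ hψ hab (n+1) g g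
    have hc' : ψ g * (g⁻¹ * E)⁻¹ = (g⁻¹ * E)⁻¹ * ψ g := by
      have := congrArg (fun y => (g⁻¹ * E)⁻¹ * y * (g⁻¹ * E)⁻¹) hc
      simpa [mul_assoc] using this.symm
    have hE1 : E⁻¹ = (g⁻¹ * E)⁻¹ * g⁻¹ := by group
    rw [hE1]
    calc (g⁻¹ * E)⁻¹ * g⁻¹ * g = (g⁻¹ * E)⁻¹ := by group
      _ = ψ g * (g⁻¹ * E)⁻¹ * ψ g⁻¹ := by
          rw [hc', aux_psi_inv ψ hψ, mul_assoc, mul_inv_cancel, mul_one]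
      _ = ψ g * ((g⁻¹ * E)⁻¹ * g⁻¹ * (g * ψ g⁻¹)) := by group
      _ = ψ g * ((g⁻¹ * E)⁻¹ * g⁻¹ * aDelta ψ g) := by rw [hδ]
end

section
/- Let ψ be an abelian map on a group G and let m ≥ 0. Then ψ_m is an abelian map, and applying the same construction to ψ_m yields (ψ_m)_n = ψ_{mn} for every n ≥ 0; explicitly, if δ_m : G → G is defined by δ_m(g) = g·ψ_m(g⁻¹), then (δ_m)ⁿ(g⁻¹)·g = ψ_{mn}(g) for all g ∈ G. -/
section aux

variable {G : Type*} [Group G]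

/-- The subgroup generated by the range of ψ. -/
def aA (ψ : G → G) : Subgroup G := Subgroup.closure (Set.range ψ)

lemma aux_mem (ψ : G → G) (g : G) : ψ g ∈ aA ψ :=
  Subgroup.subset_closure ⟨g, rfl⟩

lemma aux_comm_s5 (ψ : G → G) (hab : ∀ a b : G, ψ a * ψ b = ψ b * ψ a) :
    ∀ x ∈ aA ψ, ∀ y ∈ aA ψ, Commute x y := by
  intro x hx y hy
  refine Subgroup.closure_induction₂ (p := fun a b _ _ => Commute a b)
    ?_ ?_ ?_ ?_ ?_ ?_ ?_ hx hy
  · rintro _ _ ⟨a, rfl⟩ ⟨b, rfl⟩; exact hab a b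
  · exact fun x _ => Commute.one_left x
  · exact fun x _ => Commute.one_right x
  · exact fun _ _ _ _ _ _ h1 h2 => h1.mul_left h2
  · exact fun _ _ _ _ _ _ h1 h2 => h1.mul_right h2
  · exact fun _ _ _ _ h => h.inv_left
  · exact fun _ _ _ _ h => h.inv_right

lemma aux_one (ψ : G → G) (hψ : ∀ a b : G, ψ (a * b) = ψ a * ψ b) : ψ 1 = 1 := by
  have h := hψ 1 1
  rw [one_mul] at h
  exact left_eq_mul.mp h

lemma aux_inv (ψ : G → G) (hψ : ∀ a b : G, ψ (a * b) = ψ a * ψ b) (g : G) :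
    ψ g⁻¹ = (ψ g)⁻¹ := by
  refine eq_inv_of_mul_eq_one_left ?_
  rw [← hψ, inv_mul_cancel, aux_one ψ hψ]

/-- `aNu ψ n g = g⁻¹ · δⁿ(g)`, so `ψ_n(g) = (aNu ψ n g)⁻¹`. -/
def aNu (ψ : G → G) (n : ℕ) (g : G) : G := g⁻¹ * (aDelta ψ)^[n] g

lemma delta_iter_eq (ψ : G → G) (n : ℕ) (g : G) :
    (aDelta ψ)^[n] g = g * aNu ψ n g := by
  simp [aNu]

lemma nu_zero (ψ : G → G) (g : G) : aNu ψ 0 g = 1 := by simp [aNu]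

lemma nu_succ (ψ : G → G) (hψ : ∀ a b : G, ψ (a * b) = ψ a * ψ b) (n : ℕ) (g : G) :
    aNu ψ (n + 1) g = aNu ψ n g * (ψ (aNu ψ n g))⁻¹ * (ψ g)⁻¹ := by
  have h : (aDelta ψ)^[n + 1] g = aDelta ψ ((aDelta ψ)^[n] g) :=
    Function.iterate_succ_apply' _ _ _
  rw [aNu, h, delta_iter_eq, aDelta, mul_inv_rev, hψ, aux_inv ψ hψ, aux_inv ψ hψ]
  group

lemma nu_mem (ψ : G → G) (hψ : ∀ a b : G, ψ (a * b) = ψ a * ψ b) (n : ℕ) (g : G) :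
    aNu ψ n g ∈ aA ψ := by
  induction n with
  | zero => rw [nu_zero]; exact one_mem _
  | succ n ih =>
    rw [nu_succ ψ hψ]
    exact mul_mem (mul_mem ih (inv_mem (aux_mem ψ _))) (inv_mem (aux_mem ψ _))

lemma nu_hom (ψ : G → G) (hψ : ∀ a b : G, ψ (a * b) = ψ a * ψ b)
    (hab : ∀ a b : G, ψ a * ψ b = ψ b * ψ a) (n : ℕ) (a b : G) :
    aNu ψ n (a * b) = aNu ψ n a * aNu ψ n b := by
  letI : CommGroup ↥(aA ψ) :=
    { (inferInstance : Group ↥(aA ψ)) with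
      mul_comm := fun x y => Subtype.ext (aux_comm_s5 ψ hab x.1 x.2 y.1 y.2) }
  induction n with
  | zero => simp [nu_zero]
  | succ n ih =>
    have key : ∀ x y p q u v : ↥(aA ψ),
        x * y * (p * q)⁻¹ * (u * v)⁻¹ = x * p⁻¹ * u⁻¹ * (y * q⁻¹ * v⁻¹) := by
      intro x y p q u v
      simp [mul_comm, mul_left_comm, mul_assoc]
    have hk := congrArg Subtype.val
      (key ⟨aNu ψ n a, nu_mem ψ hψ n a⟩ ⟨aNu ψ n b, nu_mem ψ hψ n b⟩
        ⟨ψ (aNu ψ n a), aux_mem ψ _⟩ ⟨ψ (aNu ψ n b), aux_mem ψ _⟩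
        ⟨ψ a, aux_mem ψ _⟩ ⟨ψ b, aux_mem ψ _⟩)
    simp only [Subgroup.coe_mul, Subgroup.coe_inv] at hk
    rw [nu_succ ψ hψ, nu_succ ψ hψ, nu_succ ψ hψ, ih, hψ a b, hψ (aNu ψ n a) (aNu ψ n b)]
    exact hk

lemma nu_one_arg (ψ : G → G) (hψ : ∀ a b : G, ψ (a * b) = ψ a * ψ b) (n : ℕ) :
    aNu ψ n 1 = 1 := by
  have hfix : aDelta ψ 1 = 1 := by simp [aDelta, aux_one ψ hψ]
  simp [aNu, Function.iterate_fixed hfix]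

lemma nu_inv (ψ : G → G) (hψ : ∀ a b : G, ψ (a * b) = ψ a * ψ b)
    (hab : ∀ a b : G, ψ a * ψ b = ψ b * ψ a) (n : ℕ) (g : G) :
    aNu ψ n g⁻¹ = (aNu ψ n g)⁻¹ := by
  have h := nu_hom ψ hψ hab n g g⁻¹
  rw [mul_inv_cancel, nu_one_arg ψ hψ] at h
  exact eq_inv_of_mul_eq_one_right h.symm

lemma aPsi_eq_nu_inv (ψ : G → G) (n : ℕ) (g : G) :
    aPsi ψ n g = (aNu ψ n g)⁻¹ := by
  rw [aPsi, delta_iter_eq, mul_inv_rev]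
  group

end aux

/-- For an abelian map ψ and `m ≥ 0`: `ψ_m` is an abelian map, and applying the
same construction to `ψ_m` gives `(ψ_m)_n = ψ_{mn}`. -/
theorem stmt5 {G : Type*} [Group G] (ψ : G → G)
    (hψ : ∀ a b : G, ψ (a * b) = ψ a * ψ b)
    (hab : ∀ a b : G, ψ a * ψ b = ψ b * ψ a)
    (m : ℕ) :
    (∀ a b : G, aPsi ψ m (a * b) = aPsi ψ m a * aPsi ψ m b) ∧
    (∀ a b : G, aPsi ψ m a * aPsi ψ m b = aPsi ψ m b * aPsi ψ m a) ∧
    (∀ (n : ℕ) (g : G), ((aDelta (aPsi ψ m))^[n] g)⁻¹ * g = aPsi ψ (m * n) g) := by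
  refine ⟨?_, ?_, ?_⟩
  · intro a b
    rw [aPsi_eq_nu_inv, aPsi_eq_nu_inv, aPsi_eq_nu_inv, nu_hom ψ hψ hab, mul_inv_rev]
    exact ((aux_comm_s5 ψ hab _ (nu_mem ψ hψ m b) _ (nu_mem ψ hψ m a)).inv_inv).eq
  · intro a b
    rw [aPsi_eq_nu_inv, aPsi_eq_nu_inv]
    exact ((aux_comm_s5 ψ hab _ (nu_mem ψ hψ m a) _ (nu_mem ψ hψ m b)).inv_inv).eq
  · have hd : aDelta (aPsi ψ m) = (aDelta ψ)^[m] := by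
      funext g
      rw [aDelta, aPsi_eq_nu_inv, nu_inv ψ hψ hab, inv_inv, delta_iter_eq]
    intro n g
    rw [hd, ← Function.iterate_mul]
    rfl
end

section
/- For every abelian map ψ on a group G and every n ≥ 0, the pair (G, ∘_n) is a group: ∘_n is associative, the identity element of G is a two-sided identity for ∘_n, and the two-sided ∘_n-inverse of g ∈ G is ψ_n(g)·g⁻¹·ψ_n(g⁻¹). -/
/-- `g ∘_n h = g · ψ_n(g⁻¹) · h · ψ_n(g)`. -/
def aCirc {G : Type*} [Group G] (ψ : G → G) (n : ℕ) (g h : G) : G :=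
  g * aPsi ψ n g⁻¹ * h * aPsi ψ n g

section Aux

variable {G : Type*} [Group G]

lemma aux_hom_one {φ : G → G} (hφ : ∀ a b : G, φ (a * b) = φ a * φ b) : φ 1 = 1 := by
  have h := hφ 1 1
  rw [mul_one] at h
  exact (left_eq_mul.mp h)

lemma aux_hom_inv {φ : G → G} (hφ : ∀ a b : G, φ (a * b) = φ a * φ b) (g : G) :
    φ g⁻¹ = (φ g)⁻¹ := by
  apply eq_inv_of_mul_eq_one_left
  rw [← hφ, inv_mul_cancel, aux_hom_one hφ]

lemma aPsi_zero (ψ : G → G) (g : G) : aPsi ψ 0 g = 1 := by simp [aPsi]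

lemma aDelta_iterate (ψ : G → G) (n : ℕ) (g : G) :
    (aDelta ψ)^[n] g = g * (aPsi ψ n g)⁻¹ := by
  simp [aPsi, mul_inv_rev]

lemma aPsi_succ {ψ : G → G} (hψ : ∀ a b : G, ψ (a * b) = ψ a * ψ b) (n : ℕ) (g : G) :
    aPsi ψ (n + 1) g = ψ g * (ψ (aPsi ψ n g))⁻¹ * aPsi ψ n g := by
  have h : (aDelta ψ)^[n + 1] g
      = (aDelta ψ)^[n] g * ψ (((aDelta ψ)^[n] g)⁻¹) := by
    rw [Function.iterate_succ_apply']; rfl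
  rw [aPsi, h, aux_hom_inv hψ, mul_inv_rev, inv_inv, aDelta_iterate, hψ, aux_hom_inv hψ]
  group

/-- Main induction: `ψ_n` values commute with `ψ`-values, with each other,
and `ψ_n` is a homomorphism. -/
lemma aPsi_props {ψ : G → G} (hψ : ∀ a b : G, ψ (a * b) = ψ a * ψ b)
    (hab : ∀ a b : G, ψ a * ψ b = ψ b * ψ a) (n : ℕ) :
    (∀ g h : G, Commute (aPsi ψ n g) (ψ h)) ∧
    (∀ g h : G, Commute (aPsi ψ n g) (aPsi ψ n h)) ∧
    (∀ g h : G, aPsi ψ n (g * h) = aPsi ψ n g * aPsi ψ n h) := by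
  have habC : ∀ a b : G, Commute (ψ a) (ψ b) := hab
  induction n with
  | zero =>
      refine ⟨fun g h => ?_, fun g h => ?_, fun g h => ?_⟩ <;>
        simp [aPsi_zero]
  | succ n ih =>
      obtain ⟨ihc, ihcc, ihhom⟩ := ih
      have A : ∀ x y : G,
          Commute (ψ x * (ψ (aPsi ψ n x))⁻¹ * aPsi ψ n x) (ψ y) := fun x y =>
        ((habC x y).mul_left ((habC _ y).inv_left)).mul_left (ihc x y)
      refine ⟨fun g h => ?_, fun g h => ?_, fun g h => ?_⟩
      · rw [aPsi_succ hψ]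
        exact A g h
      · rw [aPsi_succ hψ, aPsi_succ hψ]
        have B : Commute (aPsi ψ n h)
            (ψ g * (ψ (aPsi ψ n g))⁻¹ * aPsi ψ n g) :=
          ((ihc h g).mul_right ((ihc h (aPsi ψ n g)).inv_right)).mul_right (ihcc h g)
        exact ((A g h).mul_right ((A g (aPsi ψ n h)).inv_right)).mul_right B.symm
      · rw [aPsi_succ hψ, aPsi_succ hψ, aPsi_succ hψ, ihhom, hψ g h,
          hψ (aPsi ψ n g) (aPsi ψ n h), mul_inv_rev]
        -- rearrange a commuting product
        set a := ψ g
        set b := ψ h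
        set c := ψ (aPsi ψ n g)
        set d := ψ (aPsi ψ n h)
        set x := aPsi ψ n g
        set y := aPsi ψ n h
        have hbc : Commute b c := habC _ _
        have hbd : Commute b d := habC _ _
        have hcd : Commute c d := habC _ _
        have hxb : Commute x b := ihc _ _
        have hxd : Commute x d := ihc _ _
        -- goal : a * b * (d⁻¹ * c⁻¹) * (x * y) = a * c⁻¹ * x * (b * d⁻¹ * y)
        simp only [mul_assoc]
        congr 1
        rw [hbd.inv_right.left_comm, hbc.inv_right.left_comm, hxb.symm.left_comm,
          (hcd.symm.inv_left.inv_right).left_comm, hxd.inv_right.symm.left_comm,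
          hbd.inv_right.symm.left_comm]

variable {φ : G → G} (hφ : ∀ a b : G, φ (a * b) = φ a * φ b)
  (hc : ∀ a b : G, Commute (φ a) (φ b))

include hφ hc in
lemma gen_phi_circ (g h : G) : φ (g * (φ g)⁻¹ * h * φ g) = φ g * φ h := by
  rw [hφ, hφ, hφ, aux_hom_inv hφ (φ g)]
  simp only [mul_assoc]
  rw [(hc h (φ g)).eq]
  simp

include hφ hc in
lemma gen_assoc (a b c : G) :
    (a * φ a⁻¹ * b * φ a) * φ ((a * φ a⁻¹ * b * φ a)⁻¹) * c * φ (a * φ a⁻¹ * b * φ a)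
      = a * φ a⁻¹ * (b * φ b⁻¹ * c * φ b) * φ a := by
  rw [aux_hom_inv hφ a, aux_hom_inv hφ b,
    aux_hom_inv hφ (a * (φ a)⁻¹ * b * φ a), gen_phi_circ hφ hc a b]
  simp only [mul_inv_rev, mul_assoc]
  congr 2
  rw [(hc a b).inv_right.left_comm]
  rw [mul_inv_cancel_left, (hc a b).eq]

include hφ in
lemma gen_one_left (g : G) : 1 * φ (1 : G)⁻¹ * g * φ 1 = g := by
  simp [aux_hom_one hφ]

include hφ in
lemma gen_one_right (g : G) : g * φ g⁻¹ * 1 * φ g = g := by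
  rw [aux_hom_inv hφ]
  group

include hφ in
lemma gen_inv_right (g : G) :
    g * φ g⁻¹ * (φ g * g⁻¹ * φ g⁻¹) * φ g = 1 := by
  rw [aux_hom_inv hφ]
  group

include hφ hc in
lemma gen_phi_invelt (g : G) : φ (φ g * g⁻¹ * φ g⁻¹) = (φ g)⁻¹ := by
  rw [hφ, hφ, aux_hom_inv hφ g, aux_hom_inv hφ (φ g)]
  rw [(hc (φ g) g).inv_right.eq]
  group

include hφ hc in
lemma gen_inv_left (g : G) :
    (φ g * g⁻¹ * φ g⁻¹) * φ ((φ g * g⁻¹ * φ g⁻¹)⁻¹) * g * φ (φ g * g⁻¹ * φ g⁻¹) = 1 := by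
  rw [aux_hom_inv hφ (φ g * g⁻¹ * φ g⁻¹), gen_phi_invelt hφ hc, aux_hom_inv hφ g]
  group

end Aux

/-- For an abelian map ψ and `n ≥ 0`, `(G, ∘_n)` is a group: `∘_n` is associative,
`1` is a two-sided identity, and `ψ_n(g)·g⁻¹·ψ_n(g⁻¹)` is a two-sided inverse of `g`. -/
theorem stmt6 {G : Type*} [Group G] (ψ : G → G)
    (hψ : ∀ a b : G, ψ (a * b) = ψ a * ψ b)
    (hab : ∀ a b : G, ψ a * ψ b = ψ b * ψ a)
    (n : ℕ) :
    (∀ a b c : G, aCirc ψ n (aCirc ψ n a b) c = aCirc ψ n a (aCirc ψ n b c)) ∧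
    (∀ g : G, aCirc ψ n 1 g = g ∧ aCirc ψ n g 1 = g) ∧
    (∀ g : G, aCirc ψ n g (aPsi ψ n g * g⁻¹ * aPsi ψ n g⁻¹) = 1 ∧
      aCirc ψ n (aPsi ψ n g * g⁻¹ * aPsi ψ n g⁻¹) g = 1) := by
  obtain ⟨-, hcc, hhom⟩ := aPsi_props hψ hab n
  refine ⟨fun a b c => ?_, fun g => ⟨?_, ?_⟩, fun g => ⟨?_, ?_⟩⟩ <;>
    simp only [aCirc]
  · exact gen_assoc hhom hcc a b c
  · exact gen_one_left hhom g
  · exact gen_one_right hhom g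
  · exact gen_inv_right hhom g
  · exact gen_inv_left hhom hcc g
end

section
/- For every abelian map ψ on a group G, every n ≥ 0 and all g, h ∈ G, one has g ∘_{n+1} h = ((g·ψ(g⁻¹)) ∘_n h)·ψ(g). -/
private lemma psi_one {G : Type*} [Group G] (ψ : G → G)
    (hψ : ∀ a b : G, ψ (a * b) = ψ a * ψ b) : ψ 1 = 1 := by
  have := hψ 1 1
  simpa using (mul_right_cancel (a := ψ 1) (b := ψ 1) (c := 1) (by simpa using this.symm))

private lemma psi_inv {G : Type*} [Group G] (ψ : G → G)
    (hψ : ∀ a b : G, ψ (a * b) = ψ a * ψ b) (a : G) : ψ a⁻¹ = (ψ a)⁻¹ := by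
  have h := hψ a⁻¹ a
  simp [psi_one ψ hψ] at h
  exact eq_inv_of_mul_eq_one_left h.symm

/-- δ is equivariant under conjugation by any `c` commuting with the range of ψ. -/
private lemma delta_conj {G : Type*} [Group G] (ψ : G → G)
    (hψ : ∀ a b : G, ψ (a * b) = ψ a * ψ b)
    (hab : ∀ a b : G, ψ a * ψ b = ψ b * ψ a)
    (c : G) (hc : ∀ y, c * ψ y = ψ y * c) (y : G) :
    aDelta ψ (c * y * c⁻¹) = c * aDelta ψ y * c⁻¹ := by
  have hcom : ∀ y, Commute c (ψ y) := fun y => hc y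
  have hci : ∀ y, c⁻¹ * (ψ y)⁻¹ = (ψ y)⁻¹ * c⁻¹ := fun y => ((hcom y).inv_inv).eq
  have hpp : ψ c * (ψ y)⁻¹ = (ψ y)⁻¹ * ψ c :=
    ((show Commute (ψ c) (ψ y) from hab c y).inv_right).eq
  unfold aDelta
  rw [mul_inv_rev, mul_inv_rev, inv_inv, hψ, hψ, psi_inv ψ hψ, psi_inv ψ hψ]
  calc c * y * c⁻¹ * (ψ c * ((ψ y)⁻¹ * (ψ c)⁻¹))
      = c * y * c⁻¹ * (ψ c * (ψ y)⁻¹ * (ψ c)⁻¹) := by group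
    _ = c * y * c⁻¹ * ((ψ y)⁻¹ * ψ c * (ψ c)⁻¹) := by rw [hpp]
    _ = c * y * (c⁻¹ * (ψ y)⁻¹) := by group
    _ = c * y * ((ψ y)⁻¹ * c⁻¹) := by rw [hci]
    _ = c * (y * (ψ y)⁻¹) * c⁻¹ := by group

private lemma delta_iter_conj {G : Type*} [Group G] (ψ : G → G)
    (hψ : ∀ a b : G, ψ (a * b) = ψ a * ψ b)
    (hab : ∀ a b : G, ψ a * ψ b = ψ b * ψ a)
    (c : G) (hc : ∀ y, c * ψ y = ψ y * c) (n : ℕ) (y : G) :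
    (aDelta ψ)^[n] (c * y * c⁻¹) = c * (aDelta ψ)^[n] y * c⁻¹ := by
  induction n generalizing y with
  | zero => simp
  | succ n ih =>
    rw [Function.iterate_succ_apply, Function.iterate_succ_apply,
      delta_conj ψ hψ hab c hc, ih]

/-- For an abelian map ψ: `g ∘_{n+1} h = ((g·ψ(g⁻¹)) ∘_n h)·ψ(g)`. -/
theorem stmt7 {G : Type*} [Group G] (ψ : G → G)
    (hψ : ∀ a b : G, ψ (a * b) = ψ a * ψ b)
    (hab : ∀ a b : G, ψ a * ψ b = ψ b * ψ a)
    (n : ℕ) (g h : G) :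
    aCirc ψ (n + 1) g h = aCirc ψ n (g * ψ g⁻¹) h * ψ g := by
  have hc : ∀ y, ψ g * ψ y = ψ y * ψ g := fun y => hab g y
  have key := delta_iter_conj ψ hψ hab (ψ g) hc n (g⁻¹ * ψ g)
  have e1 : ψ g * (g⁻¹ * ψ g) * (ψ g)⁻¹ = (g * ψ g⁻¹)⁻¹ := by
    rw [psi_inv ψ hψ]; group
  rw [e1] at key
  have h1 : (aDelta ψ)^[n+1] g⁻¹ = (ψ g)⁻¹ * (aDelta ψ)^[n] (g * ψ g⁻¹)⁻¹ * ψ g := by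
    rw [Function.iterate_succ_apply,
      show aDelta ψ g⁻¹ = g⁻¹ * ψ g by rw [aDelta, inv_inv], key]
    group
  have h2 : (aDelta ψ)^[n+1] g = (aDelta ψ)^[n] (g * ψ g⁻¹) := by
    rw [Function.iterate_succ_apply]; rfl
  unfold aCirc aPsi
  rw [h1, h2, psi_inv ψ hψ]
  group
end

section
/- Let ψ be an abelian map on a group G. Then ψ is fixed point free (ψ(g) = g implies g = 1) if and only if ψ_n is fixed point free for every n ≥ 1. -/
/-- ψ is fixed point free if and only if `ψ_n` is fixed point free for all `n ≥ 1`. -/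
theorem stmt16 {G : Type*} [Group G] (ψ : G → G)
    (hψ : ∀ a b : G, ψ (a * b) = ψ a * ψ b)
    (hab : ∀ a b : G, ψ a * ψ b = ψ b * ψ a) :
    (∀ g : G, ψ g = g → g = 1) ↔
      (∀ n : ℕ, 1 ≤ n → ∀ g : G, aPsi ψ n g = g → g = 1) := by
  have h1 : ψ 1 = 1 := by
    have := hψ 1 1
    simp only [mul_one] at this
    exact (left_eq_mul.mp this)
  constructor
  · intro h n hn g hg
    have hδ1 : ∀ x : G, aDelta ψ x = 1 → x = 1 := by
      intro x hx
      unfold aDelta at hx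
      have hx' : ψ x⁻¹ = x⁻¹ := ((mul_eq_one_iff_inv_eq.mp hx)).symm
      have := h x⁻¹ hx'
      simpa using this
    have hg' : (aDelta ψ)^[n] g = 1 := by
      unfold aPsi at hg
      have h2 : ((aDelta ψ)^[n] g)⁻¹ * g = 1 * g := by rw [one_mul]; exact hg
      exact inv_eq_one.mp (mul_right_cancel h2)
    clear hn hg
    induction n with
    | zero => simpa using hg'
    | succ k ih =>
      rw [Function.iterate_succ_apply'] at hg'
      exact ih (hδ1 _ hg')
  · intro h g hg
    apply h 1 le_rfl g
    have hinv : ψ g⁻¹ = (ψ g)⁻¹ :=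
      eq_inv_of_mul_eq_one_left (by rw [← hψ, inv_mul_cancel, h1])
    simp [aPsi, aDelta, hinv, hg]
end

section
/- Let ψ be an abelian map on a group G. For every n ≥ 1, the map δ is a group homomorphism from (G, ∘_n) to (G, ∘_{n-1}); that is, δ(g ∘_n h) = δ(g) ∘_{n-1} δ(h) for all g, h ∈ G. -/
section Aux
variable {G : Type*} [Group G] (ψ : G → G)

/-- `wfun ψ n g` is the ψ-part of `δⁿ(g)`, i.e. `δⁿ(g) = g * wfun ψ n g`. -/
def wfun : ℕ → G → G
  | 0, _ => 1
  | n+1, g => wfun n g * (ψ (wfun n g))⁻¹ * (ψ g)⁻¹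

variable {ψ}
variable (hψ : ∀ a b : G, ψ (a * b) = ψ a * ψ b)
variable (hab : ∀ a b : G, ψ a * ψ b = ψ b * ψ a)

include hψ

lemma psi_one_s17 : ψ 1 = 1 := by
  have := hψ 1 1
  simpa using this.symm

lemma psi_inv_s17 (g : G) : ψ g⁻¹ = (ψ g)⁻¹ := by
  have h1 : ψ g⁻¹ * ψ g = 1 := by rw [← hψ]; simpa using psi_one_s17 hψ
  exact eq_inv_of_mul_eq_one_left h1

include hab

lemma comm_w (n : ℕ) (g y : G) : Commute (wfun ψ n g) (ψ y) := by
  induction n with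
  | zero => simp [wfun]
  | succ n ih =>
      have h1 : Commute (ψ (wfun ψ n g))⁻¹ (ψ y) := Commute.inv_left (hab _ _)
      have h2 : Commute (ψ g)⁻¹ (ψ y) := Commute.inv_left (hab _ _)
      exact (ih.mul_left h1).mul_left h2

lemma iter_eq (n : ℕ) (g : G) : (aDelta ψ)^[n] g = g * wfun ψ n g := by
  induction n with
  | zero => simp [wfun]
  | succ n ih =>
      rw [Function.iterate_succ_apply', ih]
      simp only [aDelta, wfun, mul_inv_rev, hψ, psi_inv_s17 hψ, mul_assoc]

lemma w_inv (n : ℕ) (g : G) : wfun ψ n g⁻¹ = (wfun ψ n g)⁻¹ := by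
  induction n with
  | zero => simp [wfun]
  | succ n ih =>
      simp only [wfun, ih, psi_inv_s17 hψ, inv_inv, mul_inv_rev]
      -- goal: (w)⁻¹ * ψ(w) * ψ g = ψ g * ψ(w) * (w)⁻¹  (up to assoc/order)
      have h1 : Commute (wfun ψ n g)⁻¹ (ψ (wfun ψ n g)) :=
        (comm_w hψ hab n g _).inv_left
      have h2 : Commute (wfun ψ n g)⁻¹ (ψ g) := (comm_w hψ hab n g _).inv_left
      have h3 : Commute (ψ (wfun ψ n g)) (ψ g) := (hab _ _ : Commute _ _)
      rw [mul_assoc, h3.eq, ← mul_assoc, h2.eq, mul_assoc, h1.eq, ← mul_assoc]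

lemma aPsi_eq (n : ℕ) (g : G) : aPsi ψ n g = (wfun ψ n g)⁻¹ := by
  simp [aPsi, iter_eq hψ hab, mul_inv_rev, mul_assoc]

lemma circ_eq (n : ℕ) (g h : G) :
    aCirc ψ n g h = g * wfun ψ n g * h * (wfun ψ n g)⁻¹ := by
  rw [aCirc, aPsi_eq hψ hab, aPsi_eq hψ hab, w_inv hψ hab, inv_inv]

end Aux

/-- For `n ≥ 1`, `δ` is a homomorphism `(G, ∘_n) → (G, ∘_{n-1})`. -/
theorem stmt17 {G : Type*} [Group G] (ψ : G → G)
    (hψ : ∀ a b : G, ψ (a * b) = ψ a * ψ b)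
    (hab : ∀ a b : G, ψ a * ψ b = ψ b * ψ a)
    (n : ℕ) (hn : 1 ≤ n) (g h : G) :
    aDelta ψ (aCirc ψ n g h) = aCirc ψ (n - 1) (aDelta ψ g) (aDelta ψ h) := by
  obtain ⟨m, rfl⟩ := Nat.exists_eq_add_of_le hn
  simp only [Nat.add_sub_cancel_left] -- careful: 1 + m - 1 = m
  set W := wfun ψ (1 + m) g with hW
  -- w m (δ g) = ψ g * W
  have hiter : aDelta ψ g * wfun ψ m (aDelta ψ g) = g * W := by
    rw [← iter_eq hψ hab, ← iter_eq hψ hab, ← Function.iterate_succ_apply]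
    norm_num [Nat.add_comm]
  have hwd : wfun ψ m (aDelta ψ g) = ψ g * W := by
    have : (aDelta ψ g)⁻¹ * (g * W) = ψ g * W := by
      simp [aDelta, psi_inv_s17 hψ, mul_assoc]
    rw [← this, ← hiter]; group
  rw [circ_eq hψ hab, circ_eq hψ hab, hwd, ← hW]
  have c1 : Commute W (ψ h) := comm_w hψ hab _ _ _
  have c2 : Commute (ψ W) (ψ h) := (hab _ _ : Commute _ _)
  simp only [aDelta, mul_inv_rev, hψ, psi_inv_s17 hψ, inv_inv]
  have e1 : ψ W * ((ψ h)⁻¹ * ((ψ W)⁻¹ * (ψ g)⁻¹)) = (ψ h)⁻¹ * (ψ g)⁻¹ := by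
    rw [← mul_assoc, c2.inv_right.eq, mul_assoc, mul_inv_cancel_left]
  have e2 : W⁻¹ * ((ψ h)⁻¹ * (ψ g)⁻¹) = (ψ h)⁻¹ * (W⁻¹ * (ψ g)⁻¹) := by
    rw [← mul_assoc, (c1.inv_left.inv_right).eq, mul_assoc]
  rw [e1]
  simp only [mul_assoc, inv_mul_cancel_left]
  rw [e2]
end

section
/- Let h be a prime, let k ≥ 1 divide h − 1, and let b be a unit of ZMod h of multiplicative order exactly k. For each integer n ≥ 0, let φ_n : ZMod k → Aut(ZMod h) be the group homomorphism sending the class of 1 to multiplication by b^n (well-defined since (b^n)^k = 1), and let F_n = ZMod h ⋊_{φ_n} ZMod k be the corresponding semidirect product. Then for all m, n ≥ 0, the groups F_m and F_n are isomorphic if and only if gcd(m, k) = gcd(n, k). -/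
open Multiplicative SemidirectProduct

/-- transporting center cardinality along a MulEquiv -/
lemma stmt19_center_mem {H1 H2 : Type*} [Group H1] [Group H2] (f : H1 ≃* H2) (a : H1)
    (ha : a ∈ Subgroup.center H1) : f a ∈ Subgroup.center H2 := by
    rw [Subgroup.mem_center_iff]
    intro g
    have := Subgroup.mem_center_iff.mp ha (f.symm g)
    calc g * f a = f (f.symm g * a) := by rw [map_mul, f.apply_symm_apply]
    _ = f (a * f.symm g) := by rw [this]
    _ = f a * g := by rw [map_mul, f.apply_symm_apply]

lemma stmt19_center_card {G1 G2 : Type*} [Group G1] [Group G2] (e : G1 ≃* G2) :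
    Nat.card (Subgroup.center G1) = Nat.card (Subgroup.center G2) :=
  Nat.card_congr
    ⟨fun c => ⟨e c.1, stmt19_center_mem e c.1 c.2⟩, fun c => ⟨e.symm c.1, stmt19_center_mem e.symm c.1 c.2⟩,
     fun c => Subtype.ext (e.symm_apply_apply c.1),
     fun c => Subtype.ext (e.apply_symm_apply c.1)⟩

/-- cardinality of `{a : ZMod k | k' ∣ a.val}` where `k = k' * d`. -/
lemma stmt19_card_dvd_val (k k' d : ℕ) [NeZero k] (hkd : k = k' * d) (hk' : 0 < k') :
    Nat.card {a : ZMod k // k' ∣ a.val} = d := by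
  have hcard : ∀ a : ZMod k, a.val < k := fun a => ZMod.val_lt a
  have e : {a : ZMod k // k' ∣ a.val} ≃ Fin d :=
    { toFun := fun a => ⟨a.1.val / k', by
        have h1 := hcard a.1
        have : a.1.val / k' < d := Nat.div_lt_of_lt_mul (by omega)
        exact this⟩,
      invFun := fun j => ⟨((j.1 * k' : ℕ) : ZMod k), by
        rw [ZMod.val_natCast]
        exact (Nat.dvd_mod_iff ⟨d, hkd⟩).mpr ⟨j.1, mul_comm _ _⟩⟩,
      left_inv := fun a => by
        apply Subtype.ext
        simp only
        rw [Nat.div_mul_cancel a.2]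
        exact ZMod.natCast_rightInverse a.1,
      right_inv := fun j => by
        apply Fin.ext
        simp only [ZMod.val_natCast]
        have hlt : j.1 * k' < k := by
          have := j.2
          calc j.1 * k' < d * k' := (Nat.mul_lt_mul_right hk').mpr j.2
          _ = k := by rw [hkd, mul_comm]
        rw [Nat.mod_eq_of_lt hlt, Nat.mul_div_cancel _ hk'] }
  rw [Nat.card_congr e, Nat.card_eq_fintype_card, Fintype.card_fin]

section stmt19aux

variable {h k : ℕ} [NeZero h] [NeZero k] (b : (ZMod h)ˣ)
variable (φ : ℕ → (Multiplicative (ZMod k) →* MulAut (Multiplicative (ZMod h))))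
variable (hφ : ∀ (i : ℕ) (x : ZMod h),
      (φ i (Multiplicative.ofAdd (1 : ZMod k))) (Multiplicative.ofAdd x) =
        Multiplicative.ofAdd (((b : ZMod h) ^ i) * x))

include hφ in
/-- general action formula -/
lemma stmt19_act (i : ℕ) (y : ZMod k) (x : ZMod h) :
    (φ i (ofAdd y)) (ofAdd x) = ofAdd ((b : ZMod h) ^ (i * y.val) * x) := by
  have key : ∀ (j : ℕ) (x : ZMod h),
      ((φ i (ofAdd (1 : ZMod k))) ^ j) (ofAdd x) = ofAdd ((b : ZMod h) ^ (i * j) * x) := by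
    intro j
    induction j with
    | zero => intro x; simp
    | succ j ih =>
      intro x
      rw [pow_succ', MulAut.mul_apply, ih, hφ]
      congr 1
      ring
  have hy : ofAdd y = (ofAdd (1 : ZMod k)) ^ y.val := by
    rw [← ofAdd_nsmul]
    congr 1
    rw [nsmul_eq_mul, mul_one]
    exact (ZMod.natCast_rightInverse y).symm
  rw [hy, map_pow, key]

omit [NeZero h] [NeZero k] in
/-- membership in the center of the semidirect product -/
lemma stmt19_mem_center (i : ℕ) (g : Multiplicative (ZMod h) ⋊[φ i] Multiplicative (ZMod k)) :
    g ∈ Subgroup.center (Multiplicative (ZMod h) ⋊[φ i] Multiplicative (ZMod k)) ↔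
      (∀ y, (φ i y) g.left = g.left) ∧ (∀ x, (φ i g.right) x = x) := by
  rw [Subgroup.mem_center_iff]
  constructor
  · intro H
    constructor
    · intro y
      have := congrArg SemidirectProduct.left (H (inr y))
      simpa using this
    · intro x
      have := congrArg SemidirectProduct.left (H (inl x))
      simp only [mul_left, left_inl, right_inl, map_one, MulAut.one_apply] at this
      -- this : x * g.left = g.left * (φ i g.right) x  (after simp, shape may vary)
      have h2 : g.left * x = g.left * (φ i g.right) x := by
        rw [mul_comm g.left x]; exact this
      exact (mul_left_cancel h2).symm
  · rintro ⟨H1, H2⟩ a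
    ext
    · simp only [mul_left]
      rw [H1 a.right, H2 a.left, mul_comm]
    · simp only [mul_right]
      exact congrArg toAdd (mul_comm a.right g.right)

end stmt19aux
section stmt19aux2

variable {h k : ℕ} [NeZero h] [NeZero k] (b : (ZMod h)ˣ)
variable (φ : ℕ → (Multiplicative (ZMod k) →* MulAut (Multiplicative (ZMod h))))
variable (hφ : ∀ (i : ℕ) (x : ZMod h),
      (φ i (Multiplicative.ofAdd (1 : ZMod k))) (Multiplicative.ofAdd x) =
        Multiplicative.ofAdd (((b : ZMod h) ^ i) * x))

include hφ in
lemma stmt19_center_card_eq (hh : h.Prime) (hk : 1 ≤ k) (hb : orderOf b = k) (i : ℕ) :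
    Nat.card (Subgroup.center (Multiplicative (ZMod h) ⋊[φ i] Multiplicative (ZMod k))) =
      (if k ∣ i then h else 1) * Nat.gcd i k := by
  haveI : Fact h.Prime := ⟨hh⟩
  -- basic facts about powers of b
  have hbone : ∀ e : ℕ, (b : ZMod h) ^ e = 1 ↔ k ∣ e := by
    intro e
    rw [← Units.val_pow_eq_pow_val, show (1 : ZMod h) = ((1 : (ZMod h)ˣ) : ZMod h) from rfl,
      ← Units.ext_iff, ← hb]
    exact orderOf_dvd_iff_pow_eq_one.symm
  -- the center is equivalent to a product of two subtypes
  have hmem := stmt19_mem_center (h := h) (k := k) φ i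
  let P : Multiplicative (ZMod h) → Prop := fun x => ∀ y, (φ i y) x = x
  let Q : Multiplicative (ZMod k) → Prop := fun y => ∀ x, (φ i y) x = x
  have eC : (Subgroup.center (Multiplicative (ZMod h) ⋊[φ i] Multiplicative (ZMod k))) ≃
      {x // P x} × {y // Q y} :=
    { toFun := fun c => (⟨c.1.left, ((hmem c.1).mp c.2).1⟩, ⟨c.1.right, ((hmem c.1).mp c.2).2⟩),
      invFun := fun p => ⟨⟨p.1.1, p.2.1⟩, (hmem _).mpr ⟨p.1.2, p.2.2⟩⟩,
      left_inv := fun c => rfl,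
      right_inv := fun p => rfl }
  rw [Nat.card_congr eC, Nat.card_prod]
  -- cardinality of the P part
  have hP : Nat.card {x // P x} = if k ∣ i then h else 1 := by
    by_cases hki : k ∣ i
    · rw [if_pos hki]
      have hall : ∀ x, P x := by
        intro x y
        rw [show x = Multiplicative.ofAdd x.toAdd from rfl,
          show y = Multiplicative.ofAdd y.toAdd from rfl, stmt19_act b φ hφ]
        rw [(hbone _).mpr (Dvd.dvd.mul_right hki _), one_mul]
      rw [Nat.card_congr (Equiv.subtypeUnivEquiv hall),
        Nat.card_congr (Multiplicative.toAdd (α := ZMod h)), Nat.card_zmod]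
    · rw [if_neg hki]
      have hbi : (b : ZMod h) ^ i ≠ 1 := fun hc => hki ((hbone i).mp hc)
      have huniq : ∀ x, P x ↔ x = 1 := by
        intro x
        constructor
        · intro hx
          have := hx (Multiplicative.ofAdd (1 : ZMod k))
          rw [show x = Multiplicative.ofAdd x.toAdd from rfl, hφ] at this
          have h2 : (b : ZMod h) ^ i * x.toAdd = x.toAdd := by
            exact Multiplicative.ofAdd.injective this
          have h3 : ((b : ZMod h) ^ i - 1) * x.toAdd = 0 := by
            rw [sub_mul, one_mul, h2, sub_self]
          rcases mul_eq_zero.mp h3 with h4 | h4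
          · exact absurd (by rwa [sub_eq_zero] at h4) hbi
          · show Multiplicative.ofAdd x.toAdd = Multiplicative.ofAdd (0 : ZMod h)
            rw [h4]
        · rintro rfl y; exact map_one _
      haveI : Unique {x // P x} :=
        { default := ⟨1, (huniq 1).mpr rfl⟩,
          uniq := fun a => Subtype.ext ((huniq a.1).mp a.2) }
      exact Nat.card_unique
  -- cardinality of the Q part
  have hQ : Nat.card {y // Q y} = Nat.gcd i k := by
    have hQ' : ∀ y, Q y ↔ k ∣ i * (Multiplicative.toAdd y).val := by
      intro y
      constructor
      · intro hy
        have := hy (Multiplicative.ofAdd (1 : ZMod h))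
        rw [show y = Multiplicative.ofAdd y.toAdd from rfl, stmt19_act b φ hφ, mul_one] at this
        exact (hbone _).mp (Multiplicative.ofAdd.injective this)
      · intro hdvd x
        rw [show x = Multiplicative.ofAdd x.toAdd from rfl,
          show y = Multiplicative.ofAdd y.toAdd from rfl, stmt19_act b φ hφ,
          (hbone _).mpr hdvd, one_mul]
    set d := Nat.gcd i k with hd
    have hdpos : 0 < d := Nat.gcd_pos_of_pos_right i hk
    have hdk : d ∣ k := Nat.gcd_dvd_right i k
    have hdi : d ∣ i := Nat.gcd_dvd_left i k
    set k' := k / d with hk'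
    have hkk' : k = k' * d := by rw [hk', Nat.div_mul_cancel hdk]
    have hk'pos : 0 < k' := by
      rcases Nat.eq_zero_or_pos k' with h0 | h0
      · rw [h0] at hkk'; omega
      · exact h0
    have hcop : Nat.Coprime (i / d) k' := Nat.coprime_div_gcd_div_gcd hdpos
    have hiff : ∀ v : ℕ, k ∣ i * v ↔ k' ∣ v := by
      intro v
      constructor
      · intro hv
        have h1 : d * k' ∣ d * ((i / d) * v) := by
          rw [← mul_assoc, Nat.mul_div_cancel' hdi]
          rw [hkk', mul_comm] at hv
          exact hv
        have h2 : k' ∣ (i / d) * v := (mul_dvd_mul_iff_left (by omega : d ≠ 0)).mp h1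
        exact (Nat.Coprime.dvd_of_dvd_mul_left (Nat.Coprime.symm hcop) h2)
      · rintro ⟨w, rfl⟩
        refine ⟨(i / d) * w, ?_⟩
        rw [hkk']
        calc i * (k' * w) = (d * (i / d)) * (k' * w) := by rw [Nat.mul_div_cancel' hdi]
        _ = k' * d * ((i/d) * w) := by ring
    have e1 : {y // Q y} ≃ {a : ZMod k // k' ∣ a.val} := by
      refine (Equiv.subtypeEquiv (Multiplicative.toAdd (α := ZMod k)) ?_)
      intro y
      rw [hQ' y, hiff]
    rw [Nat.card_congr e1, stmt19_card_dvd_val k k' d hkk' hk'pos]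
  rw [hP, hQ]

end stmt19aux2
section stmt19aux3

variable {h k : ℕ} [NeZero h] [NeZero k] (b : (ZMod h)ˣ)
variable (φ : ℕ → (Multiplicative (ZMod k) →* MulAut (Multiplicative (ZMod h))))
variable (hφ : ∀ (i : ℕ) (x : ZMod h),
      (φ i (Multiplicative.ofAdd (1 : ZMod k))) (Multiplicative.ofAdd x) =
        Multiplicative.ofAdd (((b : ZMod h) ^ i) * x))

include hφ in
lemma stmt19_iso (hb : orderOf b = k) (m n c c' : ℕ)
    (hcm : n * c ≡ m [MOD k]) (hcc' : c * c' ≡ 1 [MOD k]) :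
    Nonempty
      ((Multiplicative (ZMod h) ⋊[φ m] Multiplicative (ZMod k)) ≃*
        (Multiplicative (ZMod h) ⋊[φ n] Multiplicative (ZMod k))) := by
  have hbpow : ∀ e1 e2 : ℕ, e1 ≡ e2 [MOD k] → (b : ZMod h) ^ e1 = (b : ZMod h) ^ e2 := by
    intro e1 e2 he
    have : b ^ e1 = b ^ e2 := pow_eq_pow_iff_modEq.mpr (by rwa [hb])
    rw [← Units.val_pow_eq_pow_val, ← Units.val_pow_eq_pow_val, this]
  -- powers of exponent k are trivial in Multiplicative (ZMod k)
  have hyk : ∀ y : Multiplicative (ZMod k), y ^ k = 1 := by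
    intro y
    rw [show y = Multiplicative.ofAdd y.toAdd from rfl, ← ofAdd_nsmul]
    have : k • y.toAdd = 0 := by
      rw [nsmul_eq_mul, ZMod.natCast_self, zero_mul]
    rw [this]
    rfl
  have hpow_id : ∀ (a a' : ℕ), a * a' ≡ 1 [MOD k] → ∀ y : Multiplicative (ZMod k),
      (y ^ a) ^ a' = y := by
    intro a a' ha y
    rw [← pow_mul]
    have : a * a' ≡ 1 [MOD orderOf y] := ha.of_dvd (orderOf_dvd_of_pow_eq_one (hyk y))
    calc y ^ (a * a') = y ^ 1 := pow_eq_pow_iff_modEq.mpr this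
    _ = y := pow_one y
  -- the key compatibility
  have hkey : ∀ y : Multiplicative (ZMod k), φ n (y ^ c) = φ m y := by
    intro y
    apply DFunLike.ext
    intro z
    set a := Multiplicative.toAdd y with ha
    set x := Multiplicative.toAdd z with hx
    have hyc : y ^ c = Multiplicative.ofAdd (((c * a.val : ℕ) : ZMod k)) := by
      rw [show y = Multiplicative.ofAdd a from rfl, ← ofAdd_nsmul]
      congr 1
      rw [nsmul_eq_mul, Nat.cast_mul, ZMod.natCast_rightInverse a]
    rw [show z = Multiplicative.ofAdd x from rfl, show y = Multiplicative.ofAdd a from rfl] at *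
    rw [hyc, stmt19_act b φ hφ, stmt19_act b φ hφ]
    congr 2
    apply hbpow
    calc n * (((c * a.val : ℕ) : ZMod k)).val ≡ n * (c * a.val) [MOD k] := by
          rw [ZMod.val_natCast]
          exact (Nat.mod_modEq _ k).mul_left n
    _ = (n * c) * a.val := by ring
    _ ≡ m * a.val [MOD k] := hcm.mul_right a.val
  exact ⟨{
    toFun := fun g => ⟨g.left, g.right ^ c⟩,
    invFun := fun g => ⟨g.left, g.right ^ c'⟩,
    left_inv := fun g => SemidirectProduct.ext rfl (hpow_id c c' hcc' g.right),
    right_inv := fun g => SemidirectProduct.ext rfl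
      (hpow_id c' c (by rwa [mul_comm c' c]) g.right),
    map_mul' := fun g1 g2 => SemidirectProduct.ext
      (by simp only [mul_left]; rw [hkey g1.right])
      (by simp only [mul_right]; rw [mul_pow]) }⟩

end stmt19aux3

lemma stmt19_exists_c (k m n : ℕ) (hk : 1 ≤ k) (hgcd : Nat.gcd m k = Nat.gcd n k) :
    ∃ c c', (n * c ≡ m [MOD k]) ∧ (c * c' ≡ 1 [MOD k]) := by
  haveI : NeZero k := ⟨by omega⟩
  set d := Nat.gcd m k with hd
  have hdpos : 0 < d := Nat.gcd_pos_of_pos_right m hk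
  have hdk : d ∣ k := Nat.gcd_dvd_right m k
  have hdm : d ∣ m := Nat.gcd_dvd_left m k
  have hdn : d ∣ n := hgcd ▸ Nat.gcd_dvd_left n k
  set k' := k / d with hk'
  have hkk' : k = d * k' := (Nat.mul_div_cancel' hdk).symm
  have hk'pos : 0 < k' := by
    rcases Nat.eq_zero_or_pos k' with h0 | h0
    · rw [h0, mul_zero] at hkk'; omega
    · exact h0
  haveI : NeZero k' := ⟨by omega⟩
  have hm' : Nat.Coprime (m / d) k' := Nat.coprime_div_gcd_div_gcd hdpos
  have hn' : Nat.Coprime (n / d) k' := by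
    have := Nat.coprime_div_gcd_div_gcd (m := n) (n := k) (hgcd ▸ hdpos)
    rwa [← hgcd] at this
  set um := ZMod.unitOfCoprime (m / d) hm' with hum
  set un := ZMod.unitOfCoprime (n / d) hn' with hun
  set u := um * un⁻¹ with hu
  have hk'k : k' ∣ k := Nat.div_dvd_of_dvd hdk
  obtain ⟨v, hv⟩ := ZMod.unitsMap_surjective hk'k u
  set c := ((v : ZMod k)).val with hc
  have hcop : Nat.Coprime c k := ZMod.val_coe_unit_coprime v
  -- build c'
  set w := ZMod.unitOfCoprime c hcop with hw
  refine ⟨c, ((w⁻¹ : (ZMod k)ˣ) : ZMod k).val, ?_, ?_⟩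
  · -- n * c ≡ m [MOD k]
    have hcast : ((c : ℕ) : ZMod k') = (u : ZMod k') := by
      rw [hc, ZMod.natCast_val, ← ZMod.castHom_apply (h := hk'k)]
      rw [← hv, ZMod.unitsMap_def]
      rfl
    have hmod' : (n / d) * c ≡ m / d [MOD k'] := by
      rw [← ZMod.natCast_eq_natCast_iff]
      push_cast
      rw [hcast]
      have : (un : ZMod k') * (u : ZMod k') = (um : ZMod k') := by
        rw [hu, ← Units.val_mul]
        congr 1
        rw [mul_comm um un⁻¹, ← mul_assoc]
        simp
      rw [show ((n / d : ℕ) : ZMod k') = (un : ZMod k') from (ZMod.coe_unitOfCoprime _ hn').symm,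
        this, ZMod.coe_unitOfCoprime]
    have := hmod'.mul_left' (c := d)
    rw [hkk']
    calc n * c = d * ((n / d) * c) := by rw [← mul_assoc, Nat.mul_div_cancel' hdn]
    _ ≡ d * (m / d) [MOD d * k'] := this
    _ = m := Nat.mul_div_cancel' hdm
  · -- c * c' ≡ 1 [MOD k]
    rw [← ZMod.natCast_eq_natCast_iff]
    push_cast
    rw [show ((c : ℕ) : ZMod k) = (w : ZMod k) from (ZMod.coe_unitOfCoprime _ hcop).symm,
      ZMod.natCast_val, ZMod.cast_id, ← Units.val_mul]
    simp

/-- Let `h` be a prime, `k ∣ h - 1` with `k ≥ 1`, and `b` a unit of `ZMod h` of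
multiplicative order exactly `k`.  For `n ≥ 0` let `φ n : ZMod k → Aut (ZMod h)`
be the homomorphism sending the class of `1` to multiplication by `b^n`, and let
`F n = ZMod h ⋊[φ n] ZMod k`.  Then `F m ≅ F n` iff `gcd(m,k) = gcd(n,k)`. -/
theorem stmt19 (h k : ℕ) (hh : h.Prime) (hk : 1 ≤ k) (hdvd : k ∣ h - 1)
    (b : (ZMod h)ˣ) (hb : orderOf b = k)
    (φ : ℕ → (Multiplicative (ZMod k) →* MulAut (Multiplicative (ZMod h))))
    (hφ : ∀ (i : ℕ) (x : ZMod h),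
      (φ i (Multiplicative.ofAdd (1 : ZMod k))) (Multiplicative.ofAdd x) =
        Multiplicative.ofAdd (((b : ZMod h) ^ i) * x))
    (m n : ℕ) :
    Nonempty
      ((Multiplicative (ZMod h) ⋊[φ m] Multiplicative (ZMod k)) ≃*
        (Multiplicative (ZMod h) ⋊[φ n] Multiplicative (ZMod k))) ↔
      Nat.gcd m k = Nat.gcd n k := by
  haveI : NeZero h := ⟨hh.pos.ne'⟩
  haveI : NeZero k := ⟨by omega⟩
  constructor
  · rintro ⟨e⟩
    have hcent := stmt19_center_card e
    rw [stmt19_center_card_eq b φ hφ hh hk hb m,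
      stmt19_center_card_eq b φ hφ hh hk hb n] at hcent
    have h2 : 2 ≤ h := hh.two_le
    have hgm : Nat.gcd m k ∣ k := Nat.gcd_dvd_right m k
    have hgn : Nat.gcd n k ∣ k := Nat.gcd_dvd_right n k
    have hgm' : Nat.gcd m k ≤ k := Nat.le_of_dvd (by omega) hgm
    have hgn' : Nat.gcd n k ≤ k := Nat.le_of_dvd (by omega) hgn
    by_cases hm : k ∣ m <;> by_cases hn : k ∣ n <;>
      simp only [hm, hn, if_pos, if_neg, if_true, if_false, one_mul] at hcent
    · rw [Nat.gcd_comm m k, Nat.gcd_eq_left hm, Nat.gcd_comm n k, Nat.gcd_eq_left hn]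
    · -- k ∣ m, ¬ k ∣ n : h * gcd m k = gcd n k, contradiction
      exfalso
      have : Nat.gcd m k = k := by rw [Nat.gcd_comm]; exact Nat.gcd_eq_left hm
      rw [this] at hcent
      nlinarith
    · exfalso
      have : Nat.gcd n k = k := by rw [Nat.gcd_comm]; exact Nat.gcd_eq_left hn
      rw [this] at hcent
      nlinarith
    · exact hcent
  · intro hgcd
    obtain ⟨c, c', h1, h2⟩ := stmt19_exists_c k m n hk hgcd
    exact stmt19_iso b φ hφ hb m n c c' h1 h2
end
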